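/- A countable locally finite group G acts on a tree with finite vertex and edge stabilizers. Concretely: if G is the union of an ascending chain of finite subgroups G₁ ≤ G₂ ≤ ⋯, then the graph with vertex set and edge set both equal to the disjoint union ⊔_i G/G_i, where the edge gG_i joins vertices gG_i and gG_{i+1}, is a tree on which G acts with finite stabilizers. -/

import Mathlib

variable {G : Type} [Group G] (Gs : ℕ → Subgroup G)

/-- The vertex set `⊔_i G/G_i` of the tree associated to an ascending chain of
subgroups `G_1 ≤ G_2 ≤ ⋯` of `G`. -/
def treeVertex : Type := Σ i : ℕ, G ⧸ Gs i

instance : MulAction G (treeVertex Gs) where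
  smul g v := ⟨v.1, g • v.2⟩
  one_smul := fun ⟨i, x⟩ => congrArg (Sigma.mk i) (one_smul G x)
  mul_smul := fun g h ⟨i, x⟩ => congrArg (Sigma.mk i) (mul_smul g h x)

/-- The graph on `⊔_i G/G_i` in which the edge indexed by `gG_i` joins the vertices
`gG_i ∈ G/G_i` and `gG_{i+1} ∈ G/G_{i+1}`. -/
def treeGraph : SimpleGraph (treeVertex Gs) where
  Adj v w :=
    (∃ g : G, w.1 = v.1 + 1 ∧ v.2 = (g : G ⧸ Gs v.1) ∧ w.2 = (g : G ⧸ Gs w.1)) ∨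
    (∃ g : G, v.1 = w.1 + 1 ∧ w.2 = (g : G ⧸ Gs w.1) ∧ v.2 = (g : G ⧸ Gs v.1))
  symm := by
    constructor
    rintro v w (⟨g, h1, h2, h3⟩ | ⟨g, h1, h2, h3⟩)
    · exact Or.inr ⟨g, h1, h2, h3⟩
    · exact Or.inl ⟨g, h1, h2, h3⟩
  loopless := by
    constructor
    rintro v (⟨g, h1, -⟩ | ⟨g, h1, -⟩) <;> exact Nat.succ_ne_self v.1 h1.symm

/-- The unique neighbour one level up. -/
lemma treeGraph_up_unique (hmono : Monotone Gs) {v w w' : treeVertex Gs}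
    (hw : (treeGraph Gs).Adj v w) (hw' : (treeGraph Gs).Adj v w')
    (h1 : w.1 = v.1 + 1) (h1' : w'.1 = v.1 + 1) : w = w' := by
  obtain ⟨i, a⟩ := v
  obtain ⟨j, b⟩ := w
  obtain ⟨j', b'⟩ := w'
  simp only at h1 h1'
  subst h1; subst h1'
  rcases hw with ⟨g, -, hg1, hg2⟩ | ⟨g, hcon, -⟩
  · rcases hw' with ⟨g', -, hg1', hg2'⟩ | ⟨g', hcon', -⟩
    · have hga : a = (g : G ⧸ Gs i) := hg1
      have hga' : a = (g' : G ⧸ Gs i) := hg1'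
      have hb : b = (g : G ⧸ Gs (i + 1)) := hg2
      have hb' : b' = (g' : G ⧸ Gs (i + 1)) := hg2'
      have hgg : (g : G ⧸ Gs i) = (g' : G ⧸ Gs i) := hga ▸ hga'
      have hmem : g⁻¹ * g' ∈ Gs (i + 1) := hmono (Nat.le_succ i) (QuotientGroup.eq.mp hgg)
      have hq : (g : G ⧸ Gs (i + 1)) = (g' : G ⧸ Gs (i + 1)) := QuotientGroup.eq.mpr hmem
      exact congrArg (Sigma.mk (i + 1)) (by rw [hb, hb', hq])
    · have : i = i + 1 + 1 := hcon'
      omega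
  · have : i = i + 1 + 1 := hcon
    omega

lemma treeGraph_adj_up (i : ℕ) (g : G) :
    (treeGraph Gs).Adj ⟨i, (g : G ⧸ Gs i)⟩ ⟨i + 1, (g : G ⧸ Gs (i + 1))⟩ :=
  Or.inl ⟨g, rfl, rfl, rfl⟩

lemma treeGraph_reach_up (i n : ℕ) (g : G) :
    (treeGraph Gs).Reachable ⟨i, (g : G ⧸ Gs i)⟩ ⟨i + n, (g : G ⧸ Gs (i + n))⟩ := by
  induction n with
  | zero => exact SimpleGraph.Reachable.refl _
  | succ n ih =>
      exact ih.trans (SimpleGraph.Adj.reachable (treeGraph_adj_up Gs (i + n) g))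

/-- If a group `G` is the union of an ascending chain of finite subgroups
`G_1 ≤ G_2 ≤ ⋯`, then the graph with vertices and edges `⊔_i G/G_i`, where the edge
`gG_i` joins `gG_i` and `gG_{i+1}`, is a tree (connected and acyclic), `G` acts on it
by left multiplication, and all vertex stabilizers are finite. -/
theorem stmt16 (hmono : Monotone Gs) (hfin : ∀ i, Finite (Gs i))
    (hunion : ∀ g : G, ∃ i, g ∈ Gs i) :
    (treeGraph Gs).Connected ∧ (treeGraph Gs).IsAcyclic ∧
    (∀ (g : G) (v w : treeVertex Gs),
      (treeGraph Gs).Adj v w → (treeGraph Gs).Adj (g • v) (g • w)) ∧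
    (∀ v : treeVertex Gs, Finite (MulAction.stabilizer G v)) := by
  classical
  refine ⟨?_, ?_, ?_, ?_⟩
  · -- Connected
    have : Nonempty (treeVertex Gs) := ⟨⟨0, ((1 : G) : G ⧸ Gs 0)⟩⟩
    refine SimpleGraph.Connected.mk ?_
    · intro v w
      obtain ⟨i, a⟩ := v
      obtain ⟨j, b⟩ := w
      obtain ⟨g, rfl⟩ := QuotientGroup.mk_surjective a
      obtain ⟨h, rfl⟩ := QuotientGroup.mk_surjective b
      obtain ⟨k0, hk0⟩ := hunion (g⁻¹ * h)
      set k := max k0 (max i j) with hk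
      have hik : i ≤ k := le_trans (le_max_left i j) (le_max_right _ _)
      have hjk : j ≤ k := le_trans (le_max_right i j) (le_max_right _ _)
      have hgk : (g : G ⧸ Gs k) = (h : G ⧸ Gs k) :=
        QuotientGroup.eq.mpr (hmono (le_max_left _ _) hk0)
      have r1 := treeGraph_reach_up Gs i (k - i) g
      have r2 := treeGraph_reach_up Gs j (k - j) h
      rw [Nat.add_sub_cancel' hik] at r1
      rw [Nat.add_sub_cancel' hjk] at r2
      exact r1.trans (by rw [hgk]; exact r2.symm)
  · -- Acyclic
    intro v c hc
    -- pick a vertex of minimal level in the support of the cycle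
    have hne : {n : ℕ | ∃ x ∈ c.support, x.1 = n}.Nonempty :=
      ⟨v.1, v, c.start_mem_support, rfl⟩
    obtain ⟨u, hu_mem, hu_lvl⟩ := Nat.sInf_mem hne
    have hmin : ∀ x ∈ c.support, u.1 ≤ x.1 := by
      intro x hx
      rw [hu_lvl]
      exact Nat.sInf_le ⟨x, hx, rfl⟩
    clear hu_lvl
    -- rotate the cycle so that it starts at `u`
    set c' := c.rotate u hu_mem with hc'def
    have hc' : c'.IsCycle := hc.rotate hu_mem
    have h3 : 3 ≤ c'.length := hc'.three_le_length
    have hsupp : ∀ x ∈ c'.support, u.1 ≤ x.1 := by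
      intro x hx
      rw [SimpleGraph.Walk.support_eq_cons] at hx
      rcases List.mem_cons.mp hx with rfl | hx
      · exact le_refl _
      · exact hmin x (by
          rw [SimpleGraph.Walk.support_eq_cons c]
          exact List.mem_cons_of_mem _
            (((SimpleGraph.Walk.support_rotate c u hu_mem).perm.mem_iff).mp hx))
    -- destructure the cycle
    obtain ⟨b, hub, p, hpeq⟩ := SimpleGraph.Walk.not_nil_iff.mp hc'.not_nil
    rw [hpeq] at hc' hsupp
    rw [SimpleGraph.Walk.cons_isCycle_iff] at hc'
    obtain ⟨hp_path, hedge⟩ := hc'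
    -- the last vertex before returning to `u`
    have hpnil : ¬ p.reverse.Nil := by
      intro hnil
      rw [SimpleGraph.Walk.nil_iff_length_eq, SimpleGraph.Walk.length_reverse] at hnil
      rw [hpeq] at h3
      simp [SimpleGraph.Walk.length_cons, hnil] at h3
    obtain ⟨x, hux, q, hqeq⟩ := SimpleGraph.Walk.not_nil_iff.mp hpnil
    have hx_supp : x ∈ p.support := by
      have : x ∈ p.reverse.support := by
        rw [hqeq]
        exact List.mem_cons_of_mem _ q.start_mem_support
      rwa [SimpleGraph.Walk.support_reverse, List.mem_reverse] at this
    have hx_edge : s(u, x) ∈ p.edges := by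
      have : s(u, x) ∈ p.reverse.edges := by
        rw [hqeq]
        exact List.mem_cons_self
      rwa [SimpleGraph.Walk.edges_reverse, List.mem_reverse] at this
    have hbx : b ≠ x := by
      rintro rfl
      exact hedge hx_edge
    -- both `b` and `x` lie one level above `u`
    have hb_supp : b ∈ p.support := p.start_mem_support
    have hb_lvl : u.1 ≤ b.1 := hsupp b (List.mem_cons_of_mem _ hb_supp)
    have hx_lvl : u.1 ≤ x.1 := hsupp x (List.mem_cons_of_mem _ hx_supp)
    have hb1 : b.1 = u.1 + 1 := by
      rcases hub with ⟨g, h1, -⟩ | ⟨g, h1, -⟩ <;> omega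
    have hx1 : x.1 = u.1 + 1 := by
      rcases hux with ⟨g, h1, -⟩ | ⟨g, h1, -⟩ <;> omega
    exact hbx (treeGraph_up_unique Gs hmono hub hux hb1 hx1)
  · -- Equivariance
    rintro g v w (⟨g', h1, h2, h3⟩ | ⟨g', h1, h2, h3⟩)
    · refine Or.inl ⟨g * g', h1, ?_, ?_⟩
      · show g • v.2 = _
        rw [h2]; exact MulAction.Quotient.smul_mk _ g g'
      · show g • w.2 = _
        rw [h3]; exact MulAction.Quotient.smul_mk _ g g'
    · refine Or.inr ⟨g * g', h1, ?_, ?_⟩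
      · show g • w.2 = _
        rw [h2]; exact MulAction.Quotient.smul_mk _ g g'
      · show g • v.2 = _
        rw [h3]; exact MulAction.Quotient.smul_mk _ g g' 
  · -- Finite stabilizers
    intro v
    obtain ⟨i, a⟩ := v
    obtain ⟨g, rfl⟩ := QuotientGroup.mk_surjective a
    have key : ∀ h : G, h ∈ MulAction.stabilizer G (⟨i, (g : G ⧸ Gs i)⟩ : treeVertex Gs) →
        g⁻¹ * h * g ∈ Gs i := by
      intro h hh
      have heqv : (⟨i, h • (g : G ⧸ Gs i)⟩ : treeVertex Gs) = ⟨i, (g : G ⧸ Gs i)⟩ := hh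
      have h2 : h • (g : G ⧸ Gs i) = (g : G ⧸ Gs i) :=
        heq_iff_eq.mp (Sigma.mk.inj_iff.mp heqv).2
      rw [MulAction.Quotient.smul_mk] at h2
      have h3 : (h * g)⁻¹ * g ∈ Gs i := QuotientGroup.eq.mp h2
      have h4 : g⁻¹ * h * g = ((h * g)⁻¹ * g)⁻¹ := by group
      rw [h4]
      exact (Gs i).inv_mem h3
    have : Finite (Gs i) := hfin i
    refine Finite.of_injective
      (fun h : MulAction.stabilizer G (⟨i, (g : G ⧸ Gs i)⟩ : treeVertex Gs) =>
        (⟨g⁻¹ * (h : G) * g, key h h.2⟩ : Gs i)) ?_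
    intro h1 h2 heq
    have : g⁻¹ * (h1 : G) * g = g⁻¹ * (h2 : G) * g := congrArg Subtype.val heq
    have : (h1 : G) = (h2 : G) := by
      have := congrArg (fun z => g * z * g⁻¹) this
      simpa [mul_assoc] using this
    exact Subtype.ext this
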